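/- arXiv:1910.08122 — 10 statements merged into one kernel-verified Lean document; each statement's English description precedes it below -/
import Mathlib

section
/- Let q be a prime and k ≤ n natural numbers. Let M : Fin k → (Fin n → ℤ) × (Fin n → ℤ) be a family of integer symplectic vectors in canonical form (the X-parts restricted to the first k coordinates form the k×k identity matrix). Suppose that for all i, j ∈ Fin k the symplectic product (M i) ⊙ (M j) is divisible by q. Then there exists M' : Fin k → (Fin n → ℤ) × (Fin n → ℤ) such that every entry of M' is congruent modulo q to the corresponding entry of M, and (M' i) ⊙ (M' j) = 0 in ℤ for all i, j ∈ Fin k. (Every qudit stabilizer code can be transformed into a local-dimension-invariant code.) -/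
/-- The symplectic product of two vectors `u v : (Fin n → R) × (Fin n → R)`,
where the first component is the X-part and the second the Z-part. -/
def symp {R : Type*} [CommRing R] {n : ℕ} (u v : (Fin n → R) × (Fin n → R)) : R :=
  ∑ j, (v.2 j * u.1 j - v.1 j * u.2 j)

/-- Every qudit stabilizer code (in canonical form) can be transformed into a
local-dimension-invariant code. -/
theorem embedding_theorem (q n k : ℕ) (hq : q.Prime) (hkn : k ≤ n)
    (M : Fin k → (Fin n → ℤ) × (Fin n → ℤ))
    (hcanon : ∀ i i' : Fin k, (M i).1 (Fin.castLE hkn i') = if i = i' then 1 else 0)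
    (hcomm : ∀ i j : Fin k, (q : ℤ) ∣ symp (M i) (M j)) :
    ∃ M' : Fin k → (Fin n → ℤ) × (Fin n → ℤ),
      (∀ i : Fin k, ∀ j : Fin n,
        (M' i).1 j ≡ (M i).1 j [ZMOD q] ∧ (M' i).2 j ≡ (M i).2 j [ZMOD q]) ∧
      (∀ i j : Fin k, symp (M' i) (M' j) = 0) := by
  classical
  set s : Fin k → Fin k → ℤ := fun i j => symp (M i) (M j) with hs
  have hanti : ∀ i j : Fin k, s j i = - s i j := by
    intro i j
    simp only [hs, symp, ← Finset.sum_neg_distrib]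
    exact Finset.sum_congr rfl (fun x _ => by ring)
  have hself : ∀ i : Fin k, s i i = 0 := by
    intro i
    simp only [hs, symp]
    exact Finset.sum_eq_zero (fun x _ => by ring)
  set t : Fin k → Fin k → ℤ := fun i j => s i j / q with ht
  have hqt : ∀ i j : Fin k, (q : ℤ) * t i j = s i j :=
    fun i j => Int.mul_ediv_cancel' (hcomm i j)
  set c : Fin k → Fin k → ℤ := fun i j => if i < j then t i j else 0 with hc
  have hkey : ∀ i j : Fin k, s i j = q * (c i j - c j i) := by
    intro i j
    rcases lt_trichotomy i j with h | h | h
    · simp only [hc, if_pos h, if_neg (not_lt.mpr h.le), sub_zero, hqt]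
    · subst h
      simp [hself i, hc]
    · simp only [hc, if_neg (not_lt.mpr h.le), if_pos h, zero_sub, mul_neg, hqt]
      rw [hanti i j, neg_neg]
  set d : Fin k → Fin n → ℤ := fun i x => if h : (x : ℕ) < k then c i ⟨x, h⟩ else 0 with hd
  refine ⟨fun i => ((M i).1, fun x => (M i).2 x + q * d i x), ?_, ?_⟩
  · intro i x
    refine ⟨Int.ModEq.refl _, ?_⟩
    exact (Int.modEq_iff_dvd.mpr ⟨-d i x, by ring⟩)
  · intro i j
    have hA : ∑ x : Fin n, (q : ℤ) * d j x * (M i).1 x = q * c j i := by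
      rw [Finset.sum_eq_single (Fin.castLE hkn i)]
      · have h1 : ((Fin.castLE hkn i : Fin n) : ℕ) < k := i.isLt
        have h2 : (⟨((Fin.castLE hkn i : Fin n) : ℕ), h1⟩ : Fin k) = i := by
          apply Fin.ext; rfl
        simp [hd, h1, h2, hcanon i i]
      · intro x _ hx
        by_cases h1 : (x : ℕ) < k
        · have h2 : Fin.castLE hkn (⟨(x : ℕ), h1⟩ : Fin k) = x := by
            apply Fin.ext; rfl
          have h3 : i ≠ (⟨(x : ℕ), h1⟩ : Fin k) := by
            intro heq
            apply hx
            rw [← h2, ← heq]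
          have := hcanon i ⟨(x : ℕ), h1⟩
          rw [h2] at this
          simp [this, h3]
        · simp [hd, h1]
      · intro h; exact absurd (Finset.mem_univ _) h
    have hB : ∑ x : Fin n, (M j).1 x * ((q : ℤ) * d i x) = q * c i j := by
      rw [Finset.sum_eq_single (Fin.castLE hkn j)]
      · have h1 : ((Fin.castLE hkn j : Fin n) : ℕ) < k := j.isLt
        have h2 : (⟨((Fin.castLE hkn j : Fin n) : ℕ), h1⟩ : Fin k) = j := by
          apply Fin.ext; rfl
        simp [hd, h1, h2, hcanon j j]
      · intro x _ hx
        by_cases h1 : (x : ℕ) < k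
        · have h2 : Fin.castLE hkn (⟨(x : ℕ), h1⟩ : Fin k) = x := by
            apply Fin.ext; rfl
          have h3 : j ≠ (⟨(x : ℕ), h1⟩ : Fin k) := by
            intro heq
            apply hx
            rw [← h2, ← heq]
          have := hcanon j ⟨(x : ℕ), h1⟩
          rw [h2] at this
          simp [this, h3]
        · simp [hd, h1]
      · intro h; exact absurd (Finset.mem_univ _) h
    have hsplit : symp ((M i).1, fun x => (M i).2 x + q * d i x)
        ((M j).1, fun x => (M j).2 x + q * d j x)
        = s i j + (∑ x : Fin n, (q : ℤ) * d j x * (M i).1 x)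
          - ∑ x : Fin n, (M j).1 x * ((q : ℤ) * d i x) := by
      simp only [symp, hs]
      rw [← Finset.sum_add_distrib, ← Finset.sum_sub_distrib]
      exact Finset.sum_congr rfl (fun x _ => by ring)
    rw [hsplit, hA, hB, hkey i j]
    ring
end

section
/- Let q be a prime and k ≤ n natural numbers. Let M : Fin k → (Fin n → ℤ) × (Fin n → ℤ) be in canonical form (the X-parts restricted to the first k coordinates form the k×k identity matrix) with every entry of M lying in {0, 1, …, q−1}, and suppose that for all i, j ∈ Fin k the symplectic product (M i) ⊙ (M j) is divisible by q. Then there exists M' : Fin k → (Fin n → ℤ) × (Fin n → ℤ) such that every entry of M' is congruent modulo q to the corresponding entry of M, (M' i) ⊙ (M' j) = 0 in ℤ for all i, j, and every entry of M' has absolute value at most (2 + (n − k)·(q − 1))·(q − 1). -/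
theorem symp_antisymm {n : ℕ} (u v : (Fin n → ℤ) × (Fin n → ℤ)) :
    symp u v = - symp v u := by
  unfold symp
  rw [← Finset.sum_neg_distrib]
  exact Finset.sum_congr rfl fun _ _ => by ring

/-- The invariant form produced from a canonical-form code with entries in
`{0, …, q-1}` has all entries bounded in absolute value by `(2+(n-k)(q-1))(q-1)`. -/
theorem embedding_entry_bound (q n k : ℕ) (hq : q.Prime) (hkn : k ≤ n)
    (M : Fin k → (Fin n → ℤ) × (Fin n → ℤ))
    (hcanon : ∀ i i' : Fin k, (M i).1 (Fin.castLE hkn i') = if i = i' then 1 else 0)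
    (hrange : ∀ i : Fin k, ∀ j : Fin n,
      (0 ≤ (M i).1 j ∧ (M i).1 j ≤ (q : ℤ) - 1) ∧
      (0 ≤ (M i).2 j ∧ (M i).2 j ≤ (q : ℤ) - 1))
    (hcomm : ∀ i j : Fin k, (q : ℤ) ∣ symp (M i) (M j)) :
    ∃ M' : Fin k → (Fin n → ℤ) × (Fin n → ℤ),
      (∀ i : Fin k, ∀ j : Fin n,
        (M' i).1 j ≡ (M i).1 j [ZMOD q] ∧ (M' i).2 j ≡ (M i).2 j [ZMOD q]) ∧
      (∀ i j : Fin k, symp (M' i) (M' j) = 0) ∧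
      (∀ i : Fin k, ∀ j : Fin n,
        |(M' i).1 j| ≤ ((2 + (n - k) * (q - 1)) * (q - 1) : ℕ) ∧
        |(M' i).2 j| ≤ ((2 + (n - k) * (q - 1)) * (q - 1) : ℕ)) := by
  classical
  set Q : ℤ := (q : ℤ) - 1 with hQdef
  have hq2 : (2 : ℤ) ≤ (q : ℤ) := by exact_mod_cast hq.two_le
  have hQ1 : 1 ≤ Q := by omega
  set m : ℤ := ((n - k : ℕ) : ℤ) with hmdef
  have hm0 : 0 ≤ m := Int.ofNat_nonneg _
  have hB : (((2 + (n - k) * (q - 1)) * (q - 1) : ℕ) : ℤ) = (2 + m * Q) * Q := by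
    have h1 : (1 : ℕ) ≤ q := hq.one_lt.le
    push_cast [Nat.cast_sub h1]
    ring
  -- basic symplectic facts
  have hself : ∀ i : Fin k, symp (M i) (M i) = 0 := by
    intro i
    have := symp_antisymm (M i) (M i)
    linarith
  -- the correction matrix
  set δ : Fin k → Fin k → ℤ := fun i j => if i ≤ j then symp (M i) (M j) else 0 with hδdef
  have hδdvd : ∀ i j, (q : ℤ) ∣ δ i j := by
    intro i j
    by_cases h : i ≤ j <;> simp [hδdef, h, hcomm]
  have hkey : ∀ i j, δ i j - δ j i = symp (M i) (M j) := by
    intro i j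
    by_cases hij : i ≤ j
    · by_cases hji : j ≤ i
      · have : i = j := le_antisymm hij hji
        subst this
        simp [hδdef, hself]
      · simp [hδdef, hij, hji]
    · have hji : j ≤ i := le_of_not_ge hij
      have := symp_antisymm (M i) (M j)
      simp only [hδdef, hij, hji, if_true, if_false]
      linarith
  -- canonical form helpers
  have hA1 : ∀ i : Fin k, (M i).1 (Fin.castLE hkn i) = 1 := by
    intro i; simpa using hcanon i i
  have hcast : ∀ (l : Fin n) (h : (l : ℕ) < k), Fin.castLE hkn ⟨(l : ℕ), h⟩ = l := by
    intro l h; ext; rfl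
  have hA0 : ∀ (i : Fin k) (l : Fin n) (h : (l : ℕ) < k),
      (⟨(l : ℕ), h⟩ : Fin k) ≠ i → (M i).1 l = 0 := by
    intro i l h hne
    have := hcanon i ⟨(l : ℕ), h⟩
    rw [hcast l h] at this
    rw [this, if_neg (fun e => hne e.symm)]
  -- the perturbation
  set d : Fin k → Fin n → ℤ := fun i l => if h : (l : ℕ) < k then δ i ⟨(l : ℕ), h⟩ else 0
    with hddef
  set M' : Fin k → (Fin n → ℤ) × (Fin n → ℤ) :=
    fun i => ((M i).1, fun l => (M i).2 l + d i l) with hM'def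
  have hd_ci : ∀ (i j : Fin k), d j (Fin.castLE hkn i) = δ j i := by
    intro i j
    have h : ((Fin.castLE hkn i : Fin n) : ℕ) < k := i.isLt
    simp only [hddef, dif_pos h]
    congr 1
  have hsum1 : ∀ i j : Fin k, ∑ l, d j l * (M i).1 l = δ j i := by
    intro i j
    rw [Finset.sum_eq_single (Fin.castLE hkn i)]
    · rw [hd_ci, hA1, mul_one]
    · intro l _ hne
      by_cases h : (l : ℕ) < k
      · rw [hA0 i l h (fun e => hne (by rw [← e, hcast])), mul_zero]
      · simp [hddef, h]
    · simp
  have hsum2 : ∀ i j : Fin k, ∑ l, (M j).1 l * d i l = δ i j := by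
    intro i j
    rw [Finset.sum_eq_single (Fin.castLE hkn j)]
    · rw [hd_ci, hA1, one_mul]
    · intro l _ hne
      by_cases h : (l : ℕ) < k
      · rw [hA0 j l h (fun e => hne (by rw [← e, hcast])), zero_mul]
      · simp [hddef, h]
    · simp
  refine ⟨M', ?_, ?_, ?_⟩
  · -- congruence
    intro i l
    constructor
    · rfl
    · refine Int.ModEq.symm (Int.modEq_iff_dvd.mpr ?_)
      have heq : (M' i).2 l - (M i).2 l = d i l := by simp [hM'def]
      rw [heq]
      by_cases h : (l : ℕ) < k
      · simpa [hddef, h] using hδdvd i ⟨(l : ℕ), h⟩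
      · simp [hddef, h]
  · -- symplectic product vanishes
    intro i j
    have hexp : symp (M' i) (M' j)
        = symp (M i) (M j) + ((∑ l, d j l * (M i).1 l) - ∑ l, (M j).1 l * d i l) := by
      simp only [symp, hM'def]
      rw [← Finset.sum_sub_distrib, ← Finset.sum_add_distrib]
      exact Finset.sum_congr rfl fun _ _ => by ring
    rw [hexp, hsum1, hsum2]
    have := hkey i j
    linarith
  · -- entry bounds
    rw [hB]
    have hQ0 : (0:ℤ) ≤ Q := by linarith
    have hQB : Q ≤ (2 + m * Q) * Q := by nlinarith [mul_nonneg hm0 (mul_nonneg hQ0 hQ0)]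
    -- key bound on perturbed entries
    have hT : ∀ i j : Fin k, i ≠ j →
        |(M i).2 (Fin.castLE hkn j) + symp (M i) (M j)| ≤ Q + m * Q ^ 2 := by
      intro i j hij
      set u : Fin n → ℤ := fun l =>
        (M j).2 l * (M i).1 l - (M j).1 l * (M i).2 l
          + (if l = Fin.castLE hkn j then (M i).2 l else 0) with hudef
      have hu : (M i).2 (Fin.castLE hkn j) + symp (M i) (M j) = ∑ l, u l := by
        simp only [hudef, symp]
        rw [Finset.sum_add_distrib, Finset.sum_ite_eq' Finset.univ (Fin.castLE hkn j)]
        simp [add_comm]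
      set b : Fin n → ℤ := fun l =>
        (if l = Fin.castLE hkn i then Q else 0) + (if (l : ℕ) < k then 0 else Q ^ 2)
        with hbdef
      have hub : ∀ l : Fin n, |u l| ≤ b l := by
        intro l
        by_cases h : (l : ℕ) < k
        · by_cases hci : l = Fin.castLE hkn i
          · have hiv : (⟨(l : ℕ), h⟩ : Fin k) = i :=
              Fin.castLE_injective hkn (by rw [hcast l h]; exact hci)
            have hAj : (M j).1 l = 0 := hA0 j l h (by rw [hiv]; exact hij.symm ∘ Eq.symm)
            have hAi : (M i).1 l = 1 := by rw [hci]; exact hA1 i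
            have hcj : l ≠ Fin.castLE hkn j := by
              rw [hci]
              intro e
              exact hij (Fin.castLE_injective hkn e)
            have hul : u l = (M j).2 l := by
              simp only [hudef]; rw [if_neg hcj, hAj, hAi]; ring
            have hbl : b l = Q := by
              simp only [hbdef]; rw [if_pos hci, if_pos h, add_zero]
            rw [hul, hbl, abs_le]
            obtain ⟨_, h2⟩ := hrange j l
            constructor <;> [linarith [h2.1]; exact h2.2]
          · have hiv : (⟨(l : ℕ), h⟩ : Fin k) ≠ i := by
              intro e; exact hci (by rw [← e, hcast])
            have hAi : (M i).1 l = 0 := hA0 i l h hiv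
            have hbl : b l = 0 := by
              simp only [hbdef]; rw [if_neg hci, if_pos h, add_zero]
            by_cases hcj : l = Fin.castLE hkn j
            · have hAj : (M j).1 l = 1 := by rw [hcj]; exact hA1 j
              have hul : u l = 0 := by
                simp only [hudef]; rw [if_pos hcj, hAi, hAj]; ring
              rw [hul, hbl, abs_zero]
            · have hjv : (⟨(l : ℕ), h⟩ : Fin k) ≠ j := by
                intro e; exact hcj (by rw [← e, hcast])
              have hAj : (M j).1 l = 0 := hA0 j l h hjv
              have hul : u l = 0 := by
                simp only [hudef]; rw [if_neg hcj, hAi, hAj]; ring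
              rw [hul, hbl, abs_zero]
        · have hci : l ≠ Fin.castLE hkn i := by
            intro e
            exact h (by rw [e]; exact i.isLt)
          have hcj : l ≠ Fin.castLE hkn j := by
            intro e
            exact h (by rw [e]; exact j.isLt)
          have hul : u l = (M j).2 l * (M i).1 l - (M j).1 l * (M i).2 l := by
            simp only [hudef]; rw [if_neg hcj, add_zero]
          have hbl : b l = Q ^ 2 := by
            simp only [hbdef]; rw [if_neg hci, if_neg h, zero_add]
          rw [hul, hbl]
          obtain ⟨⟨hi1a, hi1b⟩, hi2a, hi2b⟩ := hrange i l
          obtain ⟨⟨hj1a, hj1b⟩, hj2a, hj2b⟩ := hrange j l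
          rw [abs_le]
          constructor <;> nlinarith
      have hsb : ∑ l, b l = Q + m * Q ^ 2 := by
        simp only [hbdef]
        rw [Finset.sum_add_distrib, Finset.sum_ite_eq' Finset.univ (Fin.castLE hkn i)]
        have h2 : ∑ l : Fin n, (if (l : ℕ) < k then (0:ℤ) else Q ^ 2) = m * Q ^ 2 := by
          rw [Fin.sum_univ_eq_sum_range (fun t => if t < k then (0:ℤ) else Q ^ 2) n]
          rw [Finset.range_eq_Ico, ← Finset.sum_Ico_consecutive _ (Nat.zero_le k) hkn]
          have ha : ∑ t ∈ Finset.Ico 0 k, (if t < k then (0:ℤ) else Q ^ 2) = 0 := by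
            apply Finset.sum_eq_zero
            intro t ht
            rw [if_pos (Finset.mem_Ico.mp ht).2]
          have hb2 : ∑ t ∈ Finset.Ico k n, (if t < k then (0:ℤ) else Q ^ 2)
              = m * Q ^ 2 := by
            rw [Finset.sum_congr rfl (fun t ht => if_neg (not_lt.mpr (Finset.mem_Ico.mp ht).1)),
              Finset.sum_const, Nat.card_Ico, nsmul_eq_mul]
          rw [ha, hb2, zero_add]
        rw [h2]
        simp
      calc |(M i).2 (Fin.castLE hkn j) + symp (M i) (M j)| = |∑ l, u l| := by rw [hu]
        _ ≤ ∑ l, |u l| := Finset.abs_sum_le_sum_abs _ _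
        _ ≤ ∑ l, b l := Finset.sum_le_sum fun l _ => hub l
        _ = Q + m * Q ^ 2 := hsb
    intro i l
    have hZ : ∀ a : ℤ, 0 ≤ a → a ≤ Q → |a| ≤ (2 + m * Q) * Q := by
      intro a h0 h1
      rw [abs_of_nonneg h0]
      linarith
    constructor
    · exact hZ _ (hrange i l).1.1 (hrange i l).1.2
    · show |(M i).2 l + d i l| ≤ _
      by_cases h : (l : ℕ) < k
      · set j : Fin k := ⟨(l : ℕ), h⟩ with hjdef
        have hdl : d i l = δ i j := by simp [hddef, h, hjdef]
        by_cases hij : i ≤ j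
        · by_cases heq : i = j
          · have : δ i j = 0 := by
              rw [hδdef]
              simp only [if_pos hij]
              rw [← heq, hself]
            rw [hdl, this, add_zero]
            exact hZ _ (hrange i l).2.1 (hrange i l).2.2
          · have hlcj : l = Fin.castLE hkn j := (hcast l h).symm
            have hδS : δ i j = symp (M i) (M j) := if_pos hij
            have := hT i j heq
            rw [← hlcj] at this
            rw [hdl, hδS]
            calc |(M i).2 l + symp (M i) (M j)| ≤ Q + m * Q ^ 2 := this
              _ ≤ (2 + m * Q) * Q := by nlinarith
        · have : δ i j = 0 := if_neg hij
          rw [hdl, this, add_zero]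
          exact hZ _ (hrange i l).2.1 (hrange i l).2.2
      · have : d i l = 0 := by simp [hddef, h]
        rw [this, add_zero]
        exact hZ _ (hrange i l).2.1 (hrange i l).2.2
end

section
/- Let M : Fin k → (Fin n → ℤ) × (Fin n → ℤ) satisfy (M i) ⊙ (M j) = 0 in ℤ for all i, j, and let B ≥ 1 be a natural number bounding the absolute value of every entry of M. Let d ≥ 1 be a natural number, and suppose that every nonzero e : (Fin n → ℚ) × (Fin n → ℚ) that is undetectable for M over ℚ (i.e. (M i) ⊙ e = 0 in ℚ for all i, with M viewed over ℚ) has weight at least d. Then for every prime p with p > B^(2(d−1)) · (2(d−1))^(d−1), every nonzero ē : (Fin n → ZMod p) × (Fin n → ZMod p) that is undetectable for the reduction of M modulo p has weight at least d. (For all sufficiently large primes p, the distance of the embedded non-degenerate stabilizer code is at least preserved.) -/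
/-- The weight of a symplectic vector: the number of registers on which it is nonzero. -/
def wt {R : Type*} [Zero R] [DecidableEq R] {n : ℕ} (e : (Fin n → R) × (Fin n → R)) : ℕ :=
  (Finset.univ.filter fun j : Fin n => (e.1 j, e.2 j) ≠ ((0 : R), (0 : R))).card

open Matrix in
lemma det_sq_le_real {ι : Type*} [Fintype ι] [DecidableEq ι]
    (C : Matrix ι ι ℝ) {b : ℝ} (hb : 0 ≤ b) (hC : ∀ i j, |C i j| ≤ b) :
    C.det ^ 2 ≤ ((Fintype.card ι : ℝ) * b ^ 2) ^ Fintype.card ι := by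
  rcases isEmpty_or_nonempty ι with h | h
  · simp [Matrix.det_isEmpty, Fintype.card_eq_zero]
  set m : ℕ := Fintype.card ι with hm
  have hm0 : 0 < m := Fintype.card_pos
  set G := Cᴴ * C with hGdef
  have hG : G.PosSemidef := posSemidef_conjTranspose_mul_self C
  have hH : G.IsHermitian := hG.1
  set lam := hH.eigenvalues with hlam
  have hdet : C.det ^ 2 = G.det := by
    rw [hGdef, det_mul, det_conjTranspose, star_trivial, sq]
  have hprod : G.det = ∏ i, lam i := by
    simpa using hH.det_eq_prod_eigenvalues
  have hnn : ∀ i, 0 ≤ lam i := fun i => hG.eigenvalues_nonneg i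
  have htr : G.trace = ∑ i, lam i := by
    simpa [hlam] using hH.trace_eq_sum_eigenvalues
  have htrle : G.trace ≤ (m : ℝ) * ((m : ℝ) * b ^ 2) := by
    rw [Matrix.trace]
    have hdiag : ∀ j, G.diag j ≤ (m : ℝ) * b ^ 2 := by
      intro j
      have : G.diag j = ∑ i, C i j * C i j := by
        simp [hGdef, Matrix.diag, Matrix.mul_apply, Matrix.conjTranspose_apply]
      rw [this]
      calc ∑ i, C i j * C i j ≤ ∑ _i : ι, b ^ 2 := by
            refine Finset.sum_le_sum fun i _ => ?_
            calc C i j * C i j = |C i j| * |C i j| := (abs_mul_abs_self _).symm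
              _ ≤ b * b := mul_le_mul (hC i j) (hC i j) (abs_nonneg _) hb
              _ = b ^ 2 := (sq b).symm
        _ = (m : ℝ) * b ^ 2 := by simp [mul_comm, hm]
    calc ∑ j, G.diag j ≤ ∑ _j : ι, (m : ℝ) * b ^ 2 := Finset.sum_le_sum fun j _ => hdiag j
      _ = (m : ℝ) * ((m : ℝ) * b ^ 2) := by simp [mul_comm, hm]
  have hw : ∑ _i : ι, (m : ℝ)⁻¹ = 1 := by
    simp [Finset.sum_const, hm]
  have hgm := Real.geom_mean_le_arith_mean_weighted Finset.univ (fun _ => (m : ℝ)⁻¹) lam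
    (fun i _ => by positivity) hw (fun i _ => hnn i)
  have hpow : (∏ i, lam i ^ ((m : ℝ)⁻¹)) ^ m = ∏ i, lam i := by
    rw [← Finset.prod_pow]
    refine Finset.prod_congr rfl fun i _ => ?_
    rw [← Real.rpow_natCast (lam i ^ ((m:ℝ)⁻¹)) m, ← Real.rpow_mul (hnn i),
      inv_mul_cancel₀ (by exact_mod_cast hm0.ne'), Real.rpow_one]
  have hsum : ∑ i, (m : ℝ)⁻¹ * lam i ≤ (m : ℝ) * b ^ 2 := by
    rw [← Finset.mul_sum, ← htr]
    have h1 : (m:ℝ)⁻¹ * G.trace ≤ (m:ℝ)⁻¹ * ((m : ℝ) * ((m : ℝ) * b ^ 2)) :=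
      mul_le_mul_of_nonneg_left htrle (by positivity)
    calc (m:ℝ)⁻¹ * G.trace ≤ (m:ℝ)⁻¹ * ((m : ℝ) * ((m : ℝ) * b ^ 2)) := h1
      _ = (m : ℝ) * b ^ 2 := by field_simp
  have key : ∏ i, lam i ≤ ((m : ℝ) * b ^ 2) ^ m := by
    rw [← hpow]
    refine le_trans (pow_le_pow_left₀ ?_ hgm m) ?_
    · exact Finset.prod_nonneg fun i _ => Real.rpow_nonneg (hnn i) _
    · exact pow_le_pow_left₀
        (Finset.sum_nonneg fun i _ => mul_nonneg (by positivity) (hnn i)) hsum m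
  rw [hdet, hprod]; exact key

lemma det_sq_le_int {ι : Type*} [Fintype ι] [DecidableEq ι]
    (C : Matrix ι ι ℤ) {b : ℕ} (hC : ∀ i j, |C i j| ≤ (b : ℤ)) :
    C.det ^ 2 ≤ ((Fintype.card ι * b ^ 2 : ℕ) : ℤ) ^ Fintype.card ι := by
  have h1 : ((C.map (Int.cast : ℤ → ℝ)).det) = ((C.det : ℝ)) :=
    (RingHom.map_det (Int.castRingHom ℝ) C).symm
  have h2 := det_sq_le_real (C.map (Int.cast : ℤ → ℝ)) (b := (b : ℝ)) (by positivity)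
    (fun i j => by
      have := hC i j
      simp only [Matrix.map_apply]
      rw [← Int.cast_abs]
      exact_mod_cast this)
  rw [h1] at h2
  have : ((C.det ^ 2 : ℤ) : ℝ) ≤ (((Fintype.card ι * b ^ 2 : ℕ) : ℤ) ^ Fintype.card ι : ℤ) := by
    push_cast
    convert h2 using 2
  exact_mod_cast this

open Matrix in
lemma exists_rows_det_ne_zero {F : Type*} [Field F] {k : ℕ} {ι : Type*}
    [Fintype ι] [DecidableEq ι] (A : Matrix (Fin k) ι F)
    (hA : ∀ x : ι → F, A.mulVec x = 0 → x = 0) :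
    ∃ r : ι → Fin k, (A.submatrix r id).det ≠ 0 := by
  classical
  set rows : Fin k → (ι → F) := fun i => A i with hrows
  have hspan : Submodule.span F (Set.range rows) = ⊤ := by
    by_contra hW
    obtain ⟨φ, φne, hφ⟩ :=
      Submodule.exists_dual_map_eq_bot_of_lt_top (lt_top_iff_ne_top.mpr hW) inferInstance
    set x : ι → F := fun c => φ (Pi.single c 1) with hx
    have hrep : ∀ v : ι → F, φ v = ∑ c, v c * x c := by
      intro v
      have hv : v = ∑ c, Pi.single c (v c) := by
        rw [Finset.univ_sum_single]
      conv_lhs => rw [hv]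
      rw [map_sum]
      refine Finset.sum_congr rfl fun c _ => ?_
      have h1 : (Pi.single c (v c) : ι → F) = v c • (Pi.single c (1 : F) : ι → F) := by
        rw [← Pi.single_smul, smul_eq_mul, mul_one]
      rw [h1, LinearMap.map_smul, smul_eq_mul]
    have hx0 : x ≠ 0 := by
      intro h
      apply φne
      apply LinearMap.ext
      intro v
      rw [hrep v, h]
      simp
    apply hx0
    apply hA
    funext i
    have hmem : rows i ∈ Submodule.span F (Set.range rows) := Submodule.subset_span ⟨i, rfl⟩
    have : φ (rows i) = 0 := by
      have h2 : φ (rows i) ∈ (Submodule.span F (Set.range rows)).map φ :=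
        Submodule.mem_map_of_mem hmem
      rw [hφ] at h2
      exact (Submodule.mem_bot F).mp h2
    rw [hrep] at this
    simpa [Matrix.mulVec, dotProduct, hrows] using this
  obtain ⟨t, hts, htsp, hli⟩ := exists_linearIndependent F (Set.range rows)
  have htop : Submodule.span F t = ⊤ := htsp.trans hspan
  let b : Module.Basis t F (ι → F) := Module.Basis.mk hli (by rw [Subtype.range_coe, htop])
  haveI : Fintype t := ((Set.finite_range rows).subset hts).fintype
  have hcard : Fintype.card ι = Fintype.card t := by
    have h1 : Module.finrank F (ι → F) = Fintype.card t := Module.finrank_eq_card_basis b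
    have h2 : Module.finrank F (ι → F) = Fintype.card ι := Module.finrank_pi F
    omega
  let g : ι ≃ t := Fintype.equivOfCardEq hcard
  have hchoice : ∀ c : ι, ∃ i : Fin k, rows i = ↑(g c) := fun c => hts (g c).2
  choose r hr using hchoice
  refine ⟨r, ?_⟩
  have hind : LinearIndependent F (fun c : ι => ((g c : t) : ι → F)) :=
    hli.comp g g.injective
  have hind2 : LinearIndependent F (fun c : ι => (A.submatrix r id) c) := by
    have heq : (fun c : ι => (A.submatrix r id) c) = fun c : ι => ((g c : t) : ι → F) := by
      funext c
      funext c'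
      have h2 := congr_fun (hr c) c'
      simpa [Matrix.submatrix_apply, hrows] using h2
    rw [heq]
    exact hind
  intro hdet
  have hu : IsUnit (A.submatrix r id) := Matrix.linearIndependent_rows_iff_isUnit.mp hind2
  exact ((Matrix.isUnit_iff_isUnit_det _).mp hu).ne_zero hdet

open Matrix in
lemma mulVec_symp {R : Type*} [CommRing R] {n k : ℕ} (M : Fin k → (Fin n → ℤ) × (Fin n → ℤ))
    (S : Finset (Fin n)) (v : (Fin n → R) × (Fin n → R))
    (hv : ∀ j ∉ S, v.1 j = 0 ∧ v.2 j = 0)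
    (i : Fin k) :
    ((Matrix.of fun (i : Fin k) (c : {j // j ∈ S} ⊕ {j // j ∈ S}) =>
        Sum.elim (fun j => -((M i).2 j.1)) (fun j => ((M i).1 j.1)) c).map
          (Int.cast : ℤ → R)).mulVec
        (Sum.elim (fun j : {j // j ∈ S} => v.1 j.1) (fun j : {j // j ∈ S} => v.2 j.1)) i
      = symp (fun j => ((M i).1 j : R), fun j => ((M i).2 j : R)) v := by
  classical
  rw [symp]
  have hsum : ∑ j : Fin n, (v.2 j * ((M i).1 j : R) - v.1 j * ((M i).2 j : R))
      = ∑ j ∈ S, (v.2 j * ((M i).1 j : R) - v.1 j * ((M i).2 j : R)) :=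
    (Finset.sum_subset S.subset_univ (fun j _ hj => by
      rw [(hv j hj).1, (hv j hj).2]; ring)).symm
  show _ = ∑ j : Fin n, (v.2 j * ((M i).1 j : R) - v.1 j * ((M i).2 j : R))
  rw [hsum, ← Finset.sum_coe_sort S
    (fun j => (v.2 j * ((M i).1 j : R) - v.1 j * ((M i).2 j : R)))]
  simp only [Matrix.mulVec, dotProduct, Matrix.map_apply, Matrix.of_apply]
  rw [Fintype.sum_sum_type, ← Finset.sum_add_distrib]
  refine Finset.sum_congr rfl fun j _ => ?_
  simp only [Sum.elim_inl, Sum.elim_inr]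
  push_cast
  ring

/-- For all primes `p` above the cutoff `B^(2(d-1)) (2(d-1))^(d-1)`, the distance of an
embedded non-degenerate stabilizer code is at least preserved. -/
theorem distance_preserved (n k : ℕ) (M : Fin k → (Fin n → ℤ) × (Fin n → ℤ))
    (hcomm : ∀ i j : Fin k, symp (M i) (M j) = 0)
    (B : ℕ) (hB : 1 ≤ B)
    (hbound : ∀ i : Fin k, ∀ j : Fin n, |(M i).1 j| ≤ (B : ℤ) ∧ |(M i).2 j| ≤ (B : ℤ))
    (d : ℕ) (hd : 1 ≤ d)
    (hdist : ∀ e : (Fin n → ℚ) × (Fin n → ℚ), e ≠ 0 →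
      (∀ i : Fin k, symp (fun j => ((M i).1 j : ℚ), fun j => ((M i).2 j : ℚ)) e = 0) →
      d ≤ wt e)
    (p : ℕ) (hp : p.Prime) (hcut : B ^ (2 * (d - 1)) * (2 * (d - 1)) ^ (d - 1) < p) :
    ∀ e : (Fin n → ZMod p) × (Fin n → ZMod p), e ≠ 0 →
      (∀ i : Fin k, symp (fun j => ((M i).1 j : ZMod p), fun j => ((M i).2 j : ZMod p)) e = 0) →
      d ≤ wt e := by
  haveI : Fact p.Prime := ⟨hp⟩
  classical
  intro e he hsymp
  by_contra hlt
  push_neg at hlt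
  set S : Finset (Fin n) :=
    Finset.univ.filter (fun j => (e.1 j, e.2 j) ≠ ((0 : ZMod p), (0 : ZMod p))) with hS
  have hwS : wt e = S.card := rfl
  have hmemS : ∀ j, j ∈ S ↔ (e.1 j, e.2 j) ≠ ((0 : ZMod p), (0 : ZMod p)) := by
    intro j; simp [hS]
  have hSne : S.Nonempty := by
    rcases Finset.eq_empty_or_nonempty S with hemp | hne
    · exfalso
      apply he
      have hzero : ∀ j, e.1 j = 0 ∧ e.2 j = 0 := by
        intro j
        by_contra hj
        have : j ∈ S := by
          rw [hmemS]
          intro hpair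
          exact hj ⟨congr_arg Prod.fst hpair, congr_arg Prod.snd hpair⟩
        rw [hemp] at this
        exact absurd this (Finset.notMem_empty j)
      exact Prod.ext (funext fun j => (hzero j).1) (funext fun j => (hzero j).2)
    · exact hne
  have hw1 : 1 ≤ S.card := Finset.card_pos.mpr hSne
  have hwd : S.card ≤ d - 1 := by omega
  -- the integer coefficient matrix
  set Aint : Matrix (Fin k) ({j // j ∈ S} ⊕ {j // j ∈ S}) ℤ :=
    Matrix.of fun (i : Fin k) (c : {j // j ∈ S} ⊕ {j // j ∈ S}) =>
      Sum.elim (fun j => -((M i).2 j.1)) (fun j => ((M i).1 j.1)) c with hAint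
  have hAbound : ∀ i c, |Aint i c| ≤ (B : ℤ) := by
    rintro i (⟨j, hj⟩ | ⟨j, hj⟩)
    · simpa [hAint, abs_neg] using (hbound i j).2
    · simpa [hAint] using (hbound i j).1
  -- the mod-p kernel vector
  set xbar : ({j // j ∈ S} ⊕ {j // j ∈ S}) → ZMod p :=
    Sum.elim (fun j : {j // j ∈ S} => e.1 j.1) (fun j : {j // j ∈ S} => e.2 j.1) with hxbar
  have hxbar0 : xbar ≠ 0 := by
    obtain ⟨j, hj⟩ := hSne
    have hne := (hmemS j).mp hj
    intro h0
    apply hne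
    have h1 : e.1 j = 0 := congr_fun h0 (Sum.inl ⟨j, hj⟩)
    have h2 : e.2 j = 0 := congr_fun h0 (Sum.inr ⟨j, hj⟩)
    rw [h1, h2]
  have hker : (Aint.map (Int.cast : ℤ → ZMod p)).mulVec xbar = 0 := by
    funext i
    rw [hAint, hxbar]
    rw [mulVec_symp M S e (fun j hj => by
      have hpair : (e.1 j, e.2 j) = ((0 : ZMod p), (0 : ZMod p)) := by
        by_contra hne; exact hj ((hmemS j).mpr hne)
      exact ⟨congr_arg Prod.fst hpair, congr_arg Prod.snd hpair⟩)]
    exact hsymp i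
  -- the rational matrix
  set Aq : Matrix (Fin k) ({j // j ∈ S} ⊕ {j // j ∈ S}) ℚ :=
    Aint.map (Int.cast : ℤ → ℚ) with hAq
  by_cases hinj : ∀ y : ({j // j ∈ S} ⊕ {j // j ∈ S}) → ℚ, Aq.mulVec y = 0 → y = 0
  · -- Case B : rational kernel is trivial; pick rows with nonzero det
    obtain ⟨r, hr⟩ := exists_rows_det_ne_zero Aq hinj
    set D : ℤ := (Aint.submatrix r id).det with hD
    have hsubmap : Aq.submatrix r id = (Aint.submatrix r id).map (Int.cast : ℤ → ℚ) := by
      ext i j; simp [hAq]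
    have hDq : (Aq.submatrix r id).det = ((D : ℚ)) := by
      rw [hsubmap, hD]
      exact (RingHom.map_det (Int.castRingHom ℚ) _).symm
    have hDne : D ≠ 0 := by
      intro h0
      rw [hDq, h0] at hr
      exact hr (by norm_num)
    have hcardsum : Fintype.card ({j // j ∈ S} ⊕ {j // j ∈ S}) = 2 * S.card := by
      simp [Fintype.card_sum, Fintype.card_coe]; ring
    have hDsq := det_sq_le_int (Aint.submatrix r id)
      (b := B) (fun i j => hAbound (r i) (id j))
    rw [hcardsum] at hDsq
    set N : ℕ := B ^ (2 * S.card) * (2 * S.card) ^ S.card with hN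
    have hNsqn : N ^ 2 = (2 * S.card * B ^ 2) ^ (2 * S.card) := by
      rw [hN]; ring
    have hNsq : ((N : ℤ)) ^ 2 = ((2 * S.card * B ^ 2 : ℕ) : ℤ) ^ (2 * S.card) := by
      exact_mod_cast congrArg (Nat.cast : ℕ → ℤ) hNsqn
    have hDabs : |D| ≤ (N : ℤ) := by
      have h1 : |D| ^ 2 ≤ ((N : ℤ)) ^ 2 := by
        rw [sq_abs, hNsq]
        exact hDsq
      nlinarith [abs_nonneg D, Int.natCast_nonneg N]
    have hNcut : N ≤ B ^ (2 * (d - 1)) * (2 * (d - 1)) ^ (d - 1) := by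
      have h1 : B ^ (2 * S.card) ≤ B ^ (2 * (d - 1)) :=
        Nat.pow_le_pow_right hB (by omega)
      have h2 : (2 * S.card) ^ S.card ≤ (2 * (d - 1)) ^ (d - 1) := by
        calc (2 * S.card) ^ S.card ≤ (2 * (d - 1)) ^ S.card :=
              Nat.pow_le_pow_left (by omega) _
          _ ≤ (2 * (d - 1)) ^ (d - 1) := Nat.pow_le_pow_right (by omega) hwd
      exact Nat.mul_le_mul h1 h2
    have hNp : (N : ℤ) < (p : ℤ) := by
      exact_mod_cast lt_of_le_of_lt hNcut hcut
    have hnd : ¬ ((p : ℤ) ∣ D) := by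
      intro hdvd
      exact hDne (Int.eq_zero_of_abs_lt_dvd hdvd (lt_of_le_of_lt hDabs hNp))
    have hDp : ((D : ZMod p)) ≠ 0 := by
      rwa [Ne, ZMod.intCast_zmod_eq_zero_iff_dvd]
    -- the mod-p submatrix is invertible
    set Abar : Matrix (Fin k) ({j // j ∈ S} ⊕ {j // j ∈ S}) (ZMod p) :=
      Aint.map (Int.cast : ℤ → ZMod p) with hAbar
    have hsubmapp : Abar.submatrix r id = (Aint.submatrix r id).map (Int.cast : ℤ → ZMod p) := by
      ext i j; simp [hAbar]
    have hdetbar : (Abar.submatrix r id).det = ((D : ZMod p)) := by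
      rw [hsubmapp, hD]
      exact (RingHom.map_det (Int.castRingHom (ZMod p)) _).symm
    have hU : IsUnit (Abar.submatrix r id) := by
      rw [Matrix.isUnit_iff_isUnit_det, hdetbar]
      exact (isUnit_iff_ne_zero).mpr hDp
    have hmvinj := Matrix.mulVec_injective_iff_isUnit.mpr hU
    have hzero : (Abar.submatrix r id).mulVec xbar = 0 := by
      funext c
      have h3 := congr_fun hker (r c)
      simpa [Matrix.mulVec, dotProduct, hAbar, Matrix.submatrix_apply] using h3
    have : xbar = 0 := by
      apply hmvinj
      rw [hzero, Matrix.mulVec_zero]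
    exact hxbar0 this
  · -- Case A : nontrivial rational kernel gives a low-weight rational undetectable vector
    push_neg at hinj
    obtain ⟨y, hy0, hyne⟩ := hinj
    set e' : (Fin n → ℚ) × (Fin n → ℚ) :=
      (fun j => if h : j ∈ S then y (Sum.inl ⟨j, h⟩) else 0,
       fun j => if h : j ∈ S then y (Sum.inr ⟨j, h⟩) else 0) with he'
    have he'v : ∀ j ∉ S, e'.1 j = 0 ∧ e'.2 j = 0 := by
      intro j hj
      constructor <;> simp [he', hj]
    have hyelim : Sum.elim (fun j : {j // j ∈ S} => e'.1 j.1)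
        (fun j : {j // j ∈ S} => e'.2 j.1) = y := by
      funext c
      rcases c with ⟨j, hj⟩ | ⟨j, hj⟩ <;> simp [he', hj]
    have he'ne : e' ≠ 0 := by
      intro h0
      apply hyne
      rw [← hyelim, h0]
      funext c
      rcases c with c | c <;> rfl
    have he'symp : ∀ i : Fin k,
        symp (fun j => ((M i).1 j : ℚ), fun j => ((M i).2 j : ℚ)) e' = 0 := by
      intro i
      rw [← mulVec_symp M S e' he'v i]
      rw [show (Matrix.of fun (i : Fin k) (c : {j // j ∈ S} ⊕ {j // j ∈ S}) =>
          Sum.elim (fun j => -((M i).2 j.1)) (fun j => ((M i).1 j.1)) c).map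
            (Int.cast : ℤ → ℚ) = Aq from rfl, hyelim, hy0]
      rfl
    have hwt : wt e' ≤ S.card := by
      apply Finset.card_le_card
      intro j hj
      rw [Finset.mem_filter] at hj
      by_contra hjS
      exact hj.2 (by rw [(he'v j hjS).1, (he'v j hjS).2])
    have := hdist e' he'ne he'symp
    omega
end

section
/- Let p be a prime and n, k, d natural numbers with d ≥ 1; set t = (d − 1) / 2 (natural-number floor division) and assume t < k. If (p² − 1)^(k − t) < Nat.choose n t, then there is no M : Fin k → (Fin n → ZMod p) × (Fin n → ZMod p) such that every nonzero e : (Fin n → ZMod p) × (Fin n → ZMod p) that is undetectable for M has weight at least d. (For all primes p below the cutoff p** = √(1 + C(n,t)^{1/(k−t)}), a non-degenerate stabilizer code on n qudits with k stabilizer generators cannot have distance d.) -/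
lemma symp_sub {R : Type*} [CommRing R] {n : ℕ} (u e e' : (Fin n → R) × (Fin n → R)) :
    symp u (e - e') = symp u e - symp u e' := by
  simp only [symp, Prod.fst_sub, Prod.snd_sub, Pi.sub_apply, ← Finset.sum_sub_distrib]
  apply Finset.sum_congr rfl
  intros
  ring

lemma wt_sub_le {R : Type*} [CommRing R] [DecidableEq R] {n : ℕ}
    (e e' : (Fin n → R) × (Fin n → R)) : wt (e - e') ≤ wt e + wt e' := by
  unfold wt
  refine le_trans (Finset.card_le_card ?_) (Finset.card_union_le _ _)
  intro j hj
  simp only [Finset.mem_filter, Finset.mem_union, Finset.mem_univ, true_and, ne_eq,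
    Prod.mk.injEq, Prod.fst_sub, Prod.snd_sub, Pi.sub_apply] at *
  by_contra h
  push_neg at h
  obtain ⟨⟨h1, h2⟩, h3, h4⟩ := h
  exact hj ⟨by rw [h1, h3, sub_zero], by rw [h2, h4, sub_zero]⟩

/-- Below the cutoff `p** = √(1 + C(n,t)^(1/(k-t)))`, a non-degenerate stabilizer code on
`n` qudits with `k` stabilizer generators cannot have distance `d`. -/
theorem no_code_below_cutoff (p n k d : ℕ) (hp : p.Prime) (hd : 1 ≤ d)
    (ht : (d - 1) / 2 < k)
    (hcut : (p ^ 2 - 1) ^ (k - (d - 1) / 2) < Nat.choose n ((d - 1) / 2)) :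
    ¬ ∃ M : Fin k → (Fin n → ZMod p) × (Fin n → ZMod p),
      ∀ e : (Fin n → ZMod p) × (Fin n → ZMod p), e ≠ 0 →
        (∀ i : Fin k, symp (M i) e = 0) → d ≤ wt e := by
  rintro ⟨M, hM⟩
  haveI : Fact p.Prime := ⟨hp⟩
  haveI : NeZero p := ⟨hp.ne_zero⟩
  classical
  set t := (d - 1) / 2 with htdef
  -- nonzero elements of (ZMod p)²
  set nz : Finset (ZMod p × ZMod p) := Finset.univ.erase 0 with hnzdef
  have hnz : nz.card = p ^ 2 - 1 := by
    rw [hnzdef, Finset.card_erase_of_mem (Finset.mem_univ _), Finset.card_univ,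
      Fintype.card_prod, ZMod.card, sq]
  have hnzpos : 0 < (p ^ 2 - 1 : ℕ) := by
    have h2 := hp.two_le
    have : 4 ≤ p ^ 2 := by nlinarith
    omega
  -- errors with support exactly S
  set F : Finset (Fin n) → Finset (Fin n → ZMod p × ZMod p) :=
    fun S => Fintype.piFinset (fun j => if j ∈ S then nz else {0}) with hFdef
  have hsupp : ∀ S, ∀ f ∈ F S, ∀ j, (f j ≠ 0 ↔ j ∈ S) := by
    intro S f hf j
    have h := (Fintype.mem_piFinset.mp hf) j
    by_cases hj : j ∈ S <;> simp [hj, hnzdef] at h <;> simp [hj, h]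
  set B : Finset (Fin n → ZMod p × ZMod p) :=
    (Finset.powersetCard t (Finset.univ : Finset (Fin n))).biUnion F with hBdef
  set ev : (Fin n → ZMod p × ZMod p) → (Fin n → ZMod p) × (Fin n → ZMod p) :=
    fun f => (fun j => (f j).1, fun j => (f j).2) with hevdef
  -- weight bound
  have hwt : ∀ f ∈ B, wt (ev f) ≤ t := by
    intro f hf
    obtain ⟨S, hS, hfS⟩ := Finset.mem_biUnion.mp hf
    have hScard : S.card = t := (Finset.mem_powersetCard.mp hS).2
    rw [← hScard]
    apply Finset.card_le_card
    intro j hj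
    simp only [Finset.mem_filter, ne_eq, Prod.mk.injEq] at hj
    rw [← hsupp S f hfS j]
    intro h0
    exact hj.2 ⟨by show (f j).1 = 0; rw [h0]; rfl, by show (f j).2 = 0; rw [h0]; rfl⟩
  -- the syndrome map
  set ψ : (Fin n → ZMod p × ZMod p) → (Fin k → ZMod p) :=
    fun f i => symp (M i) (ev f) with hψdef
  have hinj : Set.InjOn ψ B := by
    intro f hf g hg hfg
    have hev : ev f = ev g := by
      by_contra hne
      have hez : ev f - ev g ≠ 0 := sub_ne_zero.mpr hne
      have hsyn : ∀ i, symp (M i) (ev f - ev g) = 0 := by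
        intro i
        rw [symp_sub]
        have := congrFun hfg i
        simp only [hψdef] at this
        rw [this, sub_self]
      have hge := hM _ hez hsyn
      have hle : wt (ev f - ev g) ≤ t + t :=
        le_trans (wt_sub_le _ _) (Nat.add_le_add (hwt f hf) (hwt g hg))
      have h2t : t + t ≤ d - 1 := by omega
      omega
    funext j
    have h1 := congrFun (congrArg Prod.fst hev) j
    have h2 := congrFun (congrArg Prod.snd hev) j
    exact Prod.ext h1 h2
  -- cardinality of B
  have hFcard : ∀ S ∈ Finset.powersetCard t (Finset.univ : Finset (Fin n)),
      (F S).card = (p ^ 2 - 1) ^ t := by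
    intro S hS
    have hScard : S.card = t := (Finset.mem_powersetCard.mp hS).2
    rw [hFdef]
    rw [Fintype.card_piFinset]
    calc ∏ j, (if j ∈ S then nz else {0}).card
        = ∏ j, (if j ∈ S then nz.card else 1) := by
          apply Finset.prod_congr rfl
          intro j _
          by_cases hj : j ∈ S <;> simp [hj]
      _ = ∏ j ∈ Finset.univ ∩ S, nz.card := by
          rw [Finset.prod_ite_mem]
      _ = (p ^ 2 - 1) ^ t := by
          rw [Finset.univ_inter, Finset.prod_const, hnz, hScard]
  have hdisj : ∀ S ∈ Finset.powersetCard t (Finset.univ : Finset (Fin n)),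
      ∀ S' ∈ Finset.powersetCard t (Finset.univ : Finset (Fin n)),
      S ≠ S' → Disjoint (F S) (F S') := by
    intro S _ S' _ hne
    rw [Finset.disjoint_left]
    intro f hfS hfS'
    apply hne
    ext j
    rw [← hsupp S f hfS j, hsupp S' f hfS' j]
  have hBcard : B.card = n.choose t * (p ^ 2 - 1) ^ t := by
    rw [hBdef, Finset.card_biUnion hdisj, Finset.sum_congr rfl hFcard, Finset.sum_const,
      Finset.card_powersetCard, Finset.card_univ, Fintype.card_fin, smul_eq_mul]
  -- injectivity bound
  have hBle : B.card ≤ p ^ k := by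
    have h := Finset.card_le_card_of_injOn ψ (fun f _ => Finset.mem_univ (ψ f)) hinj
    calc B.card ≤ (Finset.univ : Finset (Fin k → ZMod p)).card := h
      _ = p ^ k := by
        rw [Finset.card_univ, Fintype.card_pi]
        simp [ZMod.card]
  -- arithmetic conclusion
  have hpk : p ^ k ≤ (p ^ 2 - 1) ^ k := by
    apply Nat.pow_le_pow_left
    have h2 := hp.two_le
    have : 2 * p ≤ p * p := Nat.mul_le_mul_right p h2
    have hsq : p ^ 2 = p * p := sq p
    omega
  have hsplit : ((p ^ 2 - 1) ^ k : ℕ) = (p ^ 2 - 1) ^ (k - t) * (p ^ 2 - 1) ^ t := by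
    rw [← pow_add, Nat.sub_add_cancel ht.le]
  have hlt : (p ^ 2 - 1) ^ (k - t) * (p ^ 2 - 1) ^ t < n.choose t * (p ^ 2 - 1) ^ t :=
    (Nat.mul_lt_mul_right (pow_pos hnzpos t)).mpr hcut
  have : n.choose t * (p ^ 2 - 1) ^ t < n.choose t * (p ^ 2 - 1) ^ t := by
    calc n.choose t * (p ^ 2 - 1) ^ t = B.card := hBcard.symm
      _ ≤ p ^ k := hBle
      _ ≤ (p ^ 2 - 1) ^ k := hpk
      _ = (p ^ 2 - 1) ^ (k - t) * (p ^ 2 - 1) ^ t := hsplit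
      _ < n.choose t * (p ^ 2 - 1) ^ t := hlt
  exact absurd this (lt_irrefl _)
end

section
/- Let k ≤ n be natural numbers and let M : Fin k → (Fin n → ℤ) × (Fin n → ℤ) be in canonical form (the X-parts restricted to the first k coordinates form the k×k identity matrix) with (M i) ⊙ (M j) = 0 in ℤ for all i, j. Then there exist families x, z : Fin (n − k) → (Fin n → ℤ) × (Fin n → ℤ) such that over ℤ: (x i) ⊙ (M a) = 0 and (z i) ⊙ (M a) = 0 for all i and all a; (x i) ⊙ (x j) = 0 and (z i) ⊙ (z j) = 0 for all i, j; and (x i) ⊙ (z j) = 1 if i = j and 0 otherwise. (Invariant logical operators exist for every invariant stabilizer code.) -/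
lemma sum_supported {n k : ℕ} (hkn : k ≤ n) (F : Fin n → ℤ)
    (hF : ∀ m : Fin n, ¬ (m : ℕ) < k → F m = 0) :
    ∑ m : Fin n, F m = ∑ b : Fin k, F (Fin.castLE hkn b) := by
  classical
  have h : ∑ m ∈ Finset.univ.map (Fin.castLEEmb hkn), F m = ∑ m : Fin n, F m :=
    Finset.sum_subset (Finset.subset_univ _)
      (fun m _ hm => hF m (fun hlt => hm (Finset.mem_map.mpr ⟨⟨m, hlt⟩, Finset.mem_univ _, rfl⟩)))
  rw [← h, Finset.sum_map]
  rfl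

/-- Invariant logical operators exist for every invariant stabilizer code in canonical form. -/
theorem invariant_logical_operators (n k : ℕ) (hkn : k ≤ n)
    (M : Fin k → (Fin n → ℤ) × (Fin n → ℤ))
    (hcanon : ∀ i i' : Fin k, (M i).1 (Fin.castLE hkn i') = if i = i' then 1 else 0)
    (hcomm : ∀ i j : Fin k, symp (M i) (M j) = 0) :
    ∃ x z : Fin (n - k) → (Fin n → ℤ) × (Fin n → ℤ),
      (∀ i : Fin (n - k), ∀ a : Fin k, symp (x i) (M a) = 0) ∧
      (∀ i : Fin (n - k), ∀ a : Fin k, symp (z i) (M a) = 0) ∧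
      (∀ i j : Fin (n - k), symp (x i) (x j) = 0) ∧
      (∀ i j : Fin (n - k), symp (z i) (z j) = 0) ∧
      (∀ i j : Fin (n - k), symp (x i) (z j) = if i = j then 1 else 0) := by
  classical
  set e : Fin (n - k) → Fin n := fun i => ⟨k + i, by omega⟩ with he
  have hek : ∀ i : Fin (n - k), ¬ ((e i : ℕ) < k) := by intro i; simp [he]
  have heinj : ∀ i j : Fin (n - k), e i = e j ↔ i = j := by
    intro i j
    constructor
    · intro h
      have : (e i : ℕ) = (e j : ℕ) := by rw [h]
      simp only [he] at this
      exact Fin.ext (by omega)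
    · intro h; rw [h]
  set x : Fin (n - k) → (Fin n → ℤ) × (Fin n → ℤ) := fun i =>
    (fun m => if m = e i then 1 else 0,
     fun m => if h : (m : ℕ) < k then (M ⟨m, h⟩).2 (e i) else 0) with hx
  set z : Fin (n - k) → (Fin n → ℤ) × (Fin n → ℤ) := fun i =>
    (0, fun m => (if m = e i then 1 else 0)
          - if h : (m : ℕ) < k then (M ⟨m, h⟩).1 (e i) else 0) with hz
  have hdpos : ∀ (b : Fin k) (g : ∀ m : Fin n, (m : ℕ) < k → ℤ),
      (if h : ((Fin.castLE hkn b : Fin n) : ℕ) < k then g (Fin.castLE hkn b) h else 0)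
        = g (Fin.castLE hkn b) b.2 := fun b g => dif_pos b.2
  have key1 : ∀ i a, ∑ m : Fin n, (M a).1 m * (x i).2 m = (M a).2 (e i) := by
    intro i a
    rw [sum_supported hkn]
    · have step : ∀ b : Fin k, (M a).1 (Fin.castLE hkn b) * (x i).2 (Fin.castLE hkn b)
          = (if a = b then 1 else 0) * (M b).2 (e i) := by
        intro b
        rw [hcanon]
        congr 1
        show (if h : ((Fin.castLE hkn b : Fin n) : ℕ) < k
            then (M ⟨(Fin.castLE hkn b : Fin n), h⟩).2 (e i) else 0) = (M b).2 (e i)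
        rw [dif_pos (show ((Fin.castLE hkn b : Fin n) : ℕ) < k from b.2)]
        rfl
      rw [Finset.sum_congr rfl fun b _ => step b]
      simp
    · intro m hm
      simp [hx, hm]
  have key2 : ∀ i a, ∑ m : Fin n, (M a).1 m * (z i).2 m = 0 := by
    intro i a
    have split : ∀ m : Fin n, (M a).1 m * (z i).2 m =
        (M a).1 m * (if m = e i then 1 else 0)
        - (M a).1 m * (if h : (m : ℕ) < k then (M ⟨m, h⟩).1 (e i) else 0) := by
      intro m
      show (M a).1 m * ((if m = e i then 1 else 0)
          - if h : (m : ℕ) < k then (M ⟨m, h⟩).1 (e i) else 0) = _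
      exact mul_sub _ _ _
    rw [Finset.sum_congr rfl fun m _ => split m, Finset.sum_sub_distrib]
    have h1 : ∑ m : Fin n, (M a).1 m * (if m = e i then 1 else 0) = (M a).1 (e i) := by
      simp [Finset.sum_ite_eq']
    have h2 : ∑ m : Fin n, (M a).1 m * (if h : (m : ℕ) < k then (M ⟨m, h⟩).1 (e i) else 0)
        = (M a).1 (e i) := by
      rw [sum_supported hkn]
      · have step : ∀ b : Fin k, (M a).1 (Fin.castLE hkn b)
            * (if h : ((Fin.castLE hkn b : Fin n) : ℕ) < k
                then (M ⟨(Fin.castLE hkn b : Fin n), h⟩).1 (e i) else 0)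
            = (if a = b then 1 else 0) * (M b).1 (e i) := by
          intro b
          rw [hcanon, dif_pos (show ((Fin.castLE hkn b : Fin n) : ℕ) < k from b.2)]
          rfl
        rw [Finset.sum_congr rfl fun b _ => step b]
        simp
      · intro m hm
        simp [hm]
    rw [h1, h2, sub_self]
  refine ⟨x, z, ?_, ?_, ?_, ?_, ?_⟩
  · intro i a
    have hxi : ∑ m : Fin n, (M a).2 m * (x i).1 m = (M a).2 (e i) := by
      simp [hx, Finset.sum_ite_eq']
    rw [symp, Finset.sum_sub_distrib, hxi, key1, sub_self]
  · intro i a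
    have hzi : ∑ m : Fin n, (M a).2 m * (z i).1 m = 0 := by
      simp [hz]
    rw [symp, Finset.sum_sub_distrib, hzi, key2, zero_sub, neg_eq_zero]
  · intro i j
    rw [symp, Finset.sum_sub_distrib]
    have h1 : ∑ m : Fin n, (x j).2 m * (x i).1 m = 0 := by
      rw [Finset.sum_eq_zero]
      intro m _
      by_cases hm : m = e i
      · subst hm
        simp [hx, dif_neg (hek i)]
      · simp [hx, hm]
    have h2 : ∑ m : Fin n, (x j).1 m * (x i).2 m = 0 := by
      rw [Finset.sum_eq_zero]
      intro m _
      by_cases hm : m = e j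
      · subst hm
        simp [hx, dif_neg (hek j)]
      · simp [hx, hm]
    rw [h1, h2, sub_self]
  · intro i j
    rw [symp, Finset.sum_eq_zero]
    intro m _
    simp [hz]
  · intro i j
    rw [symp, Finset.sum_sub_distrib]
    have h2 : ∑ m : Fin n, (z j).1 m * (x i).2 m = 0 := by
      rw [Finset.sum_eq_zero]; intro m _; simp [hz]
    have h1 : ∑ m : Fin n, (z j).2 m * (x i).1 m = if i = j then 1 else 0 := by
      have step : ∀ m : Fin n, (z j).2 m * (x i).1 m
          = if m = e i then (z j).2 (e i) else 0 := by
        intro m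
        by_cases hm : m = e i
        · subst hm; simp [hx]
        · simp [hx, hm]
      rw [Finset.sum_congr rfl fun m _ => step m, Finset.sum_ite_eq']
      simp only [Finset.mem_univ, if_true]
      show (if (e i) = e j then (1:ℤ) else 0)
          - (if h : ((e i : Fin n) : ℕ) < k then (M ⟨(e i : Fin n), h⟩).1 (e j) else 0)
          = if i = j then 1 else 0
      rw [dif_neg (hek i), sub_zero]
      simp [heinj]
    rw [h1, h2, sub_zero]
end

section
/- Let q be a prime, and let n = k₁ + k₂ + m. Let M : Fin (k₁ + k₂) → (Fin n → ℤ) × (Fin n → ℤ) be a CSS-form family: each of the first k₁ rows has Z-part identically zero, each of the last k₂ rows has X-part identically zero, and the X-parts of the first k₁ rows restricted to the first k₁ coordinates form the k₁×k₁ identity matrix. Suppose (M i) ⊙ (M j) is divisible by q for all i, j. Then there exists M' : Fin (k₁ + k₂) → (Fin n → ℤ) × (Fin n → ℤ) such that every entry of M' is congruent modulo q to the corresponding entry of M, (M' i) ⊙ (M' j) = 0 in ℤ for all i, j, each of the first k₁ rows of M' has Z-part identically zero, and each of the last k₂ rows of M' has X-part identically zero. (CSS codes remain CSS codes under the local-dimension-invariant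 transformation.) -/
/-- CSS codes remain CSS codes under the local-dimension-invariant transformation. -/
theorem css_remains_css (q k₁ k₂ m : ℕ) (hq : q.Prime)
    (M : Fin (k₁ + k₂) → (Fin (k₁ + k₂ + m) → ℤ) × (Fin (k₁ + k₂ + m) → ℤ))
    (hZrows : ∀ i : Fin (k₁ + k₂), (i : ℕ) < k₁ → (M i).2 = 0)
    (hXrows : ∀ i : Fin (k₁ + k₂), k₁ ≤ (i : ℕ) → (M i).1 = 0)
    (hId : ∀ i i' : Fin (k₁ + k₂), (i : ℕ) < k₁ → (i' : ℕ) < k₁ →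
      (M i).1 (Fin.castLE (by omega) i') = if i = i' then 1 else 0)
    (hcomm : ∀ i j : Fin (k₁ + k₂), (q : ℤ) ∣ symp (M i) (M j)) :
    ∃ M' : Fin (k₁ + k₂) → (Fin (k₁ + k₂ + m) → ℤ) × (Fin (k₁ + k₂ + m) → ℤ),
      (∀ i : Fin (k₁ + k₂), ∀ j : Fin (k₁ + k₂ + m),
        (M' i).1 j ≡ (M i).1 j [ZMOD q] ∧ (M' i).2 j ≡ (M i).2 j [ZMOD q]) ∧
      (∀ i j : Fin (k₁ + k₂), symp (M' i) (M' j) = 0) ∧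
      (∀ i : Fin (k₁ + k₂), (i : ℕ) < k₁ → (M' i).2 = 0) ∧
      (∀ i : Fin (k₁ + k₂), k₁ ≤ (i : ℕ) → (M' i).1 = 0) := by
  classical
  set corr : Fin (k₁ + k₂) → Fin (k₁ + k₂ + m) → ℤ := fun i c =>
    if h : (c : ℕ) < k₁ then symp (M ⟨c, by omega⟩) (M i) else 0 with hcorr
  set M' : Fin (k₁ + k₂) → (Fin (k₁ + k₂ + m) → ℤ) × (Fin (k₁ + k₂ + m) → ℤ) :=
    fun i => if h : (i : ℕ) < k₁ then M i else (0, fun c => (M i).2 c - corr i c)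
    with hM'
  -- key lemma: picking out the identity column
  have key : ∀ i j : Fin (k₁ + k₂), (i : ℕ) < k₁ →
      ∑ c : Fin (k₁ + k₂ + m), corr j c * (M i).1 c = symp (M i) (M j) := by
    intro i j hi
    rw [Finset.sum_eq_single (Fin.castLE (by omega) i)]
    · have hlt : ((Fin.castLE (by omega : k₁ + k₂ ≤ k₁ + k₂ + m) i : Fin (k₁ + k₂ + m)) : ℕ) < k₁ := hi
      rw [hcorr]
      simp only [dif_pos hlt]
      have h1 : (⟨((Fin.castLE (by omega : k₁ + k₂ ≤ k₁ + k₂ + m) i : Fin (k₁ + k₂ + m)) : ℕ), by omega⟩ : Fin (k₁ + k₂)) = i := by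
        apply Fin.ext; rfl
      rw [h1, hId i i hi hi, if_pos rfl, mul_one]
    · intro c _ hc
      rw [hcorr]
      by_cases h : (c : ℕ) < k₁
      · simp only [dif_pos h]
        have h1 : (Fin.castLE (by omega : k₁ + k₂ ≤ k₁ + k₂ + m) (⟨(c : ℕ), by omega⟩ : Fin (k₁ + k₂))) = c := by
          apply Fin.ext; rfl
        have h3 : (M i).1 c = if i = ⟨(c : ℕ), by omega⟩ then 1 else 0 := by
          rw [← hId i ⟨(c : ℕ), by omega⟩ hi h]
          exact congrArg ((M i).1) h1.symm
        rw [h3, if_neg, mul_zero]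
        intro he
        apply hc
        rw [he]
        apply Fin.ext; rfl
      · simp only [dif_neg h, zero_mul]
    · intro h; exact absurd (Finset.mem_univ _) h
  have hcongr : ∀ i : Fin (k₁ + k₂), ∀ j : Fin (k₁ + k₂ + m),
      (M' i).1 j ≡ (M i).1 j [ZMOD q] ∧ (M' i).2 j ≡ (M i).2 j [ZMOD q] := by
    intro i j
    rw [hM']
    by_cases h : (i : ℕ) < k₁
    · simp only [dif_pos h]; exact ⟨Int.ModEq.refl _, Int.ModEq.refl _⟩
    · simp only [dif_neg h]
      constructor
      · have := hXrows i (by omega)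
        rw [this]
      · show (M i).2 j - corr i j ≡ (M i).2 j [ZMOD q]
        have : (q : ℤ) ∣ corr i j := by
          rw [hcorr]
          by_cases h' : (j : ℕ) < k₁
          · simp only [dif_pos h']; exact hcomm _ _
          · simp only [dif_neg h']; exact dvd_zero _
        have h0 : corr i j ≡ 0 [ZMOD q] := (Int.modEq_zero_iff_dvd).mpr this
        simpa using (Int.ModEq.refl ((M i).2 j)).sub h0
  refine ⟨M', hcongr, ?_, ?_, ?_⟩
  · intro i j
    by_cases hi : (i : ℕ) < k₁ <;> by_cases hj : (j : ℕ) < k₁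
    · simp only [hM', dif_pos hi, dif_pos hj, symp, hZrows i hi, hZrows j hj,
        Pi.zero_apply, mul_zero, zero_mul, sub_zero, Finset.sum_const_zero]
    · -- i X-row, j Z-row
      simp only [hM', dif_pos hi, dif_neg hj, symp, Pi.zero_apply, hZrows i hi,
        mul_zero, zero_mul, sub_zero]
      have hs : symp (M i) (M j) = ∑ c, (M j).2 c * (M i).1 c := by
        simp [symp, hXrows j (by omega)]
      calc ∑ c, ((M j).2 c - corr j c) * (M i).1 c
          = ∑ c, ((M j).2 c * (M i).1 c - corr j c * (M i).1 c) := by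
            apply Finset.sum_congr rfl; intros; ring
        _ = (∑ c, (M j).2 c * (M i).1 c) - ∑ c, corr j c * (M i).1 c := by
            rw [Finset.sum_sub_distrib]
        _ = 0 := by rw [key i j hi, hs, sub_self]
    · -- i Z-row, j X-row
      simp only [hM', dif_neg hi, dif_pos hj, symp, Pi.zero_apply, hZrows j hj,
        mul_zero, zero_mul, zero_sub]
      have hs : symp (M j) (M i) = ∑ c, (M i).2 c * (M j).1 c := by
        simp [symp, hXrows i (by omega)]
      have : ∑ c, (M j).1 c * ((M i).2 c - corr i c) = 0 := by
        calc ∑ c, (M j).1 c * ((M i).2 c - corr i c)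
            = ∑ c, ((M i).2 c * (M j).1 c - corr i c * (M j).1 c) := by
              apply Finset.sum_congr rfl; intros; ring
          _ = (∑ c, (M i).2 c * (M j).1 c) - ∑ c, corr i c * (M j).1 c := by
              rw [Finset.sum_sub_distrib]
          _ = 0 := by rw [key j i hj, hs, sub_self]
      rw [Finset.sum_neg_distrib, this, neg_zero]
    · simp only [hM', dif_neg hi, dif_neg hj, symp, Pi.zero_apply,
        mul_zero, zero_mul, sub_zero, Finset.sum_const_zero]
  · intro i hi
    simp only [hM', dif_pos hi]
    exact hZrows i hi
  · intro i hi
    simp only [hM', dif_neg (by omega : ¬ (i : ℕ) < k₁)]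
end

section
/- Let q be a prime and M : Fin k → (Fin n → ℤ) × (Fin n → ℤ). If every nonzero ē : (Fin n → ZMod q) × (Fin n → ZMod q) that is undetectable for the reduction of M modulo q has weight at least d, then every nonzero e : (Fin n → ℚ) × (Fin n → ℚ) that is undetectable for M over ℚ has weight at least d. (The distance of a code over the integers is at least the distance of the code over q bases: d* ≥ d.) -/
lemma prod_ne_zero_iff {R : Type*} [Zero R] {n : ℕ} (f : (Fin n → R) × (Fin n → R)) :
    f ≠ 0 ↔ ∃ j, f.1 j ≠ 0 ∨ f.2 j ≠ 0 := by
  constructor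
  · intro h
    by_contra hc
    push_neg at hc
    exact h (Prod.ext (funext fun j => (hc j).1) (funext fun j => (hc j).2))
  · rintro ⟨j, hj⟩ rfl
    simp at hj

lemma aux_int (q n k d : ℕ) (hq : q.Prime)
    (M : Fin k → (Fin n → ℤ) × (Fin n → ℤ))
    (hdist : ∀ e : (Fin n → ZMod q) × (Fin n → ZMod q), e ≠ 0 →
      (∀ i : Fin k, symp (fun j => ((M i).1 j : ZMod q), fun j => ((M i).2 j : ZMod q)) e = 0) →
      d ≤ wt e) :
    ∀ m : ℕ, ∀ f : (Fin n → ℤ) × (Fin n → ℤ),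
      (∑ j, ((f.1 j).natAbs + (f.2 j).natAbs)) ≤ m → f ≠ 0 →
      (∀ i : Fin k, symp (M i) f = 0) → d ≤ wt f := by
  haveI : Fact q.Prime := ⟨hq⟩
  intro m
  induction m with
  | zero =>
      intro f hm hf _
      obtain ⟨j, hj⟩ := (prod_ne_zero_iff f).mp hf
      exfalso
      have := Finset.sum_eq_zero_iff.mp (Nat.le_zero.mp hm) j (Finset.mem_univ j)
      rcases hj with hj | hj
      · exact hj (Int.natAbs_eq_zero.mp (by omega))
      · exact hj (Int.natAbs_eq_zero.mp (by omega))
  | succ m ih =>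
      intro f hm hf hsymp
      by_cases hall : ∀ j, (q : ℤ) ∣ f.1 j ∧ (q : ℤ) ∣ f.2 j
      · -- divide by q
        obtain ⟨g, hf1, hf2⟩ : ∃ g : (Fin n → ℤ) × (Fin n → ℤ),
            (∀ j, f.1 j = q * g.1 j) ∧ (∀ j, f.2 j = q * g.2 j) :=
          ⟨(fun j => f.1 j / q, fun j => f.2 j / q),
           fun j => (Int.mul_ediv_cancel' (hall j).1).symm,
           fun j => (Int.mul_ediv_cancel' (hall j).2).symm⟩
        have hqZ : (q : ℤ) ≠ 0 := by exact_mod_cast hq.pos.ne'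
        have hgne : g ≠ 0 := by
          obtain ⟨j, hj⟩ := (prod_ne_zero_iff f).mp hf
          rw [prod_ne_zero_iff]
          refine ⟨j, ?_⟩
          rcases hj with hj | hj
          · left; intro h0; exact hj (by rw [hf1 j, h0, mul_zero])
          · right; intro h0; exact hj (by rw [hf2 j, h0, mul_zero])
        have hgsymp : ∀ i, symp (M i) g = 0 := by
          intro i
          have heq : symp (M i) f = q * symp (M i) g := by
            simp only [symp, Finset.mul_sum]
            refine Finset.sum_congr rfl fun j _ => ?_
            rw [hf1 j, hf2 j]; ring
          have h0 := hsymp i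
          rw [heq] at h0
          exact (mul_eq_zero.mp h0).resolve_left hqZ
        have hmeas : (∑ j, ((g.1 j).natAbs + (g.2 j).natAbs)) ≤ m := by
          have heq : (∑ j, ((f.1 j).natAbs + (f.2 j).natAbs)) =
              q * (∑ j, ((g.1 j).natAbs + (g.2 j).natAbs)) := by
            rw [Finset.mul_sum]
            refine Finset.sum_congr rfl fun j _ => ?_
            rw [hf1 j, hf2 j, Int.natAbs_mul, Int.natAbs_mul]
            simp [mul_add]
          have hpos : 0 < ∑ j, ((g.1 j).natAbs + (g.2 j).natAbs) := by
            obtain ⟨j, hj⟩ := (prod_ne_zero_iff g).mp hgne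
            have hj' : 0 < (g.1 j).natAbs + (g.2 j).natAbs := by
              rcases hj with hj | hj
              · have := Int.natAbs_pos.mpr hj; omega
              · have := Int.natAbs_pos.mpr hj; omega
            exact lt_of_lt_of_le hj'
              (Finset.single_le_sum (f := fun j => (g.1 j).natAbs + (g.2 j).natAbs)
                (fun _ _ => Nat.zero_le _) (Finset.mem_univ j))
          have hlt : (∑ j, ((g.1 j).natAbs + (g.2 j).natAbs)) <
              (∑ j, ((f.1 j).natAbs + (f.2 j).natAbs)) := by
            rw [heq]
            calc (∑ j, ((g.1 j).natAbs + (g.2 j).natAbs))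
                = 1 * (∑ j, ((g.1 j).natAbs + (g.2 j).natAbs)) := (one_mul _).symm
              _ < q * (∑ j, ((g.1 j).natAbs + (g.2 j).natAbs)) :=
                  (Nat.mul_lt_mul_right hpos).mpr hq.one_lt
          omega
        have hwt : wt g = wt f := by
          unfold wt
          congr 1
          apply Finset.filter_congr
          intro j _
          simp only [Prod.mk.injEq, ne_eq, not_and_or]
          constructor
          · rintro (h | h)
            · left; intro h0; exact h (by
                have h1 := hf1 j; rw [h0] at h1
                exact (mul_eq_zero.mp h1.symm).resolve_left hqZ)
            · right; intro h0; exact h (by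
                have h1 := hf2 j; rw [h0] at h1
                exact (mul_eq_zero.mp h1.symm).resolve_left hqZ)
          · rintro (h | h)
            · left; intro h0; exact h (by rw [hf1 j, h0, mul_zero])
            · right; intro h0; exact h (by rw [hf2 j, h0, mul_zero])
        rw [← hwt]
        exact ih g hmeas hgne hgsymp
      · -- some entry survives mod q
        push_neg at hall
        set eb : (Fin n → ZMod q) × (Fin n → ZMod q) :=
          (fun j => ((f.1 j : ZMod q)), fun j => ((f.2 j : ZMod q))) with heb
        have hebne : eb ≠ 0 := by
          obtain ⟨j, hj⟩ := hall
          rw [prod_ne_zero_iff]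
          refine ⟨j, ?_⟩
          by_cases h1 : (q : ℤ) ∣ f.1 j
          · right
            intro h0
            exact (hj h1) ((ZMod.intCast_zmod_eq_zero_iff_dvd _ q).mp h0)
          · left
            intro h0
            exact h1 ((ZMod.intCast_zmod_eq_zero_iff_dvd _ q).mp h0)
        have hebsymp : ∀ i, symp (fun j => ((M i).1 j : ZMod q),
            fun j => ((M i).2 j : ZMod q)) eb = 0 := by
          intro i
          have heq : symp (fun j => (((M i).1 j : ZMod q)), fun j => (((M i).2 j : ZMod q))) eb =
              ((symp (M i) f : ℤ) : ZMod q) := by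
            simp only [symp, heb, Int.cast_sum, Int.cast_sub, Int.cast_mul]
          rw [heq, hsymp i, Int.cast_zero]
        have hwt : wt eb ≤ wt f := by
          apply Finset.card_le_card
          intro j hj
          simp only [Finset.mem_filter, Finset.mem_univ, true_and, Prod.mk.injEq, ne_eq,
            not_and_or, heb] at hj ⊢
          rcases hj with h | h
          · left; intro h0; exact h (by rw [h0]; simp)
          · right; intro h0; exact h (by rw [h0]; simp)
        exact le_trans (hdist eb hebne hebsymp) hwt

lemma rat_num_eq (x : ℚ) : (x.num : ℚ) = x * (x.den : ℚ) := by
  have hd : ((x.den : ℚ)) ≠ 0 := by exact_mod_cast x.den_nz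
  exact (div_eq_iff hd).mp (Rat.num_div_den x)

/-- The distance of a code over the integers is at least the distance of the code
over `q` bases: `d* ≥ d`. -/
theorem integer_distance_ge (q n k d : ℕ) (hq : q.Prime)
    (M : Fin k → (Fin n → ℤ) × (Fin n → ℤ))
    (hdist : ∀ e : (Fin n → ZMod q) × (Fin n → ZMod q), e ≠ 0 →
      (∀ i : Fin k, symp (fun j => ((M i).1 j : ZMod q), fun j => ((M i).2 j : ZMod q)) e = 0) →
      d ≤ wt e) :
    ∀ e : (Fin n → ℚ) × (Fin n → ℚ), e ≠ 0 →
      (∀ i : Fin k, symp (fun j => ((M i).1 j : ℚ), fun j => ((M i).2 j : ℚ)) e = 0) →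
      d ≤ wt e := by
  intro e he hsymp
  -- clear denominators
  set N : ℕ := ∏ j, ((e.1 j).den * (e.2 j).den) with hN
  have hNpos : 0 < N := by
    apply Finset.prod_pos
    intro j _
    exact Nat.mul_pos (e.1 j).pos (e.2 j).pos
  have hden1 : ∀ j, ((e.1 j).den : ℤ) ∣ (N : ℤ) := by
    intro j
    exact_mod_cast dvd_trans (Dvd.intro _ rfl)
      (Finset.dvd_prod_of_mem (fun j => (e.1 j).den * (e.2 j).den) (Finset.mem_univ j))
  have hden2 : ∀ j, ((e.2 j).den : ℤ) ∣ (N : ℤ) := by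
    intro j
    exact_mod_cast dvd_trans (Dvd.intro_left _ rfl)
      (Finset.dvd_prod_of_mem (fun j => (e.1 j).den * (e.2 j).den) (Finset.mem_univ j))
  obtain ⟨f, key1, key2⟩ : ∃ f : (Fin n → ℤ) × (Fin n → ℤ),
      (∀ j, ((f.1 j : ℤ) : ℚ) = N * e.1 j) ∧ (∀ j, ((f.2 j : ℤ) : ℚ) = N * e.2 j) := by
    refine ⟨(fun j => (e.1 j).num * ((N : ℤ) / (e.1 j).den),
      fun j => (e.2 j).num * ((N : ℤ) / (e.2 j).den)), fun j => ?_, fun j => ?_⟩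
    have h1 : ((N : ℤ) / (e.1 j).den) * (e.1 j).den = N := Int.ediv_mul_cancel (hden1 j)
    have h2 : (((N : ℤ) / (e.1 j).den : ℤ) : ℚ) * ((e.1 j).den : ℚ) = (N : ℚ) := by
      exact_mod_cast congrArg (Int.cast : ℤ → ℚ) h1
    calc (((e.1 j).num * ((N : ℤ) / (e.1 j).den) : ℤ) : ℚ)
        = ((e.1 j).num : ℚ) * (((N : ℤ) / (e.1 j).den : ℤ) : ℚ) := by
          rw [Int.cast_mul]
      _ = e.1 j * (((((N : ℤ) / (e.1 j).den : ℤ)) : ℚ) * ((e.1 j).den : ℚ)) := by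
          rw [rat_num_eq (e.1 j)]; ring
      _ = N * e.1 j := by rw [h2]; ring
    have h1 : ((N : ℤ) / (e.2 j).den) * (e.2 j).den = N := Int.ediv_mul_cancel (hden2 j)
    have h2 : (((N : ℤ) / (e.2 j).den : ℤ) : ℚ) * ((e.2 j).den : ℚ) = (N : ℚ) := by
      exact_mod_cast congrArg (Int.cast : ℤ → ℚ) h1
    calc (((e.2 j).num * ((N : ℤ) / (e.2 j).den) : ℤ) : ℚ)
        = ((e.2 j).num : ℚ) * (((N : ℤ) / (e.2 j).den : ℤ) : ℚ) := by
          rw [Int.cast_mul]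
      _ = e.2 j * (((((N : ℤ) / (e.2 j).den : ℤ)) : ℚ) * ((e.2 j).den : ℚ)) := by
          rw [rat_num_eq (e.2 j)]; ring
      _ = N * e.2 j := by rw [h2]; ring
  have hNQ : (N : ℚ) ≠ 0 := by exact_mod_cast hNpos.ne'
  have hiff1 : ∀ j, f.1 j = 0 ↔ e.1 j = 0 := by
    intro j
    constructor
    · intro h
      have hk := key1 j
      rw [h] at hk
      simp only [Int.cast_zero] at hk
      exact (mul_eq_zero.mp hk.symm).resolve_left hNQ
    · intro h
      have hk := key1 j
      rw [h, mul_zero] at hk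
      exact_mod_cast hk
  have hiff2 : ∀ j, f.2 j = 0 ↔ e.2 j = 0 := by
    intro j
    constructor
    · intro h
      have hk := key2 j
      rw [h] at hk
      simp only [Int.cast_zero] at hk
      exact (mul_eq_zero.mp hk.symm).resolve_left hNQ
    · intro h
      have hk := key2 j
      rw [h, mul_zero] at hk
      exact_mod_cast hk
  have hfne : f ≠ 0 := by
    obtain ⟨j, hj⟩ := (prod_ne_zero_iff e).mp he
    rw [prod_ne_zero_iff]
    refine ⟨j, ?_⟩
    rcases hj with hj | hj
    · exact Or.inl (fun h => hj ((hiff1 j).mp h))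
    · exact Or.inr (fun h => hj ((hiff2 j).mp h))
  have hfsymp : ∀ i, symp (M i) f = 0 := by
    intro i
    have hQ : ((symp (M i) f : ℤ) : ℚ) =
        N * symp (fun j => (((M i).1 j : ℚ)), fun j => (((M i).2 j : ℚ))) e := by
      simp only [symp, Int.cast_sum, Int.cast_sub, Int.cast_mul, Finset.mul_sum]
      refine Finset.sum_congr rfl fun j _ => ?_
      rw [key1 j, key2 j]
      ring
    rw [hsymp i, mul_zero] at hQ
    exact_mod_cast hQ
  have hd : d ≤ wt f :=
    aux_int q n k d hq M hdist _ f le_rfl hfne hfsymp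
  have hwt : wt f = wt e := by
    unfold wt
    congr 1
    apply Finset.filter_congr
    intro j _
    simp only [Prod.mk.injEq, ne_eq, not_and_or, hiff1 j, hiff2 j]
  rwa [hwt] at hd
end

section
/- Let s₁ = ((1,0,1,1), (0,1,0,0)) and s₂ = ((0,1,0,0), (1,0,1,−1)) be the integer symplectic vectors on n = 4 registers corresponding to the generators XZXX and ZXZZ^{−1}. Then s₁ ⊙ s₂ = 0 in ℤ, and for every prime p the minimum weight of a nonzero e : (Fin 4 → ZMod p) × (Fin 4 → ZMod p) that is undetectable for the reductions of s₁ and s₂ modulo p equals 2. (The modified generators ⟨XZXX, ZXZZ^{−1}⟩ form an invariant code whose distance remains 2 for every prime number of bases.) -/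
/-- The modified generators `⟨XZXX, ZXZZ⁻¹⟩` form an invariant code whose distance
remains 2 for every prime number of bases. -/
theorem modified_422_invariant :
    symp ((![1, 0, 1, 1], ![0, 1, 0, 0]) : (Fin 4 → ℤ) × (Fin 4 → ℤ))
      ((![0, 1, 0, 0], ![1, 0, 1, -1]) : (Fin 4 → ℤ) × (Fin 4 → ℤ)) = 0 ∧
    ∀ p : ℕ, p.Prime →
      IsLeast {w : ℕ | ∃ e : (Fin 4 → ZMod p) × (Fin 4 → ZMod p), e ≠ 0 ∧
        symp (fun j => ((![1, 0, 1, 1] : Fin 4 → ℤ) j : ZMod p),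
              fun j => ((![0, 1, 0, 0] : Fin 4 → ℤ) j : ZMod p)) e = 0 ∧
        symp (fun j => ((![0, 1, 0, 0] : Fin 4 → ℤ) j : ZMod p),
              fun j => ((![1, 0, 1, -1] : Fin 4 → ℤ) j : ZMod p)) e = 0 ∧
        wt e = w} 2 := by
  constructor
  · simp [symp, Fin.sum_univ_four]
  · intro p hp
    haveI := Fact.mk hp
    constructor
    · refine ⟨(![0,0,0,0], ![1,0,-1,0]), ?_, ?_, ?_, ?_⟩
      · intro h
        have := congrFun (congrArg Prod.snd h) 0
        simp at this
      · simp [symp, Fin.sum_univ_four]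
      · simp [symp, Fin.sum_univ_four]
      · have h : (Finset.univ.filter fun j : Fin 4 =>
            ((![(0:ZMod p),0,0,0] j, ![(1:ZMod p),0,-1,0] j) ≠ ((0:ZMod p),(0:ZMod p)))) = {0, 2} := by
          ext j
          fin_cases j <;> simp [Fin.ext_iff] <;> decide
        simp only [wt]
        rw [h]
        decide
    · rintro w ⟨e, hne, h1, h2, rfl⟩
      by_contra hlt
      push_neg at hlt
      have hle : wt e ≤ 1 := by omega
      have hzero : ∀ j k : Fin 4, j ≠ k → (e.1 j ≠ 0 ∨ e.2 j ≠ 0) → e.1 k = 0 ∧ e.2 k = 0 := by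
        intro j k hjk hj
        by_contra hc
        rw [not_and_or] at hc
        have hsub : ({j, k} : Finset (Fin 4)) ⊆
            Finset.univ.filter fun i : Fin 4 => (e.1 i, e.2 i) ≠ ((0:ZMod p),(0:ZMod p)) := by
          intro i hi
          simp only [Finset.mem_insert, Finset.mem_singleton] at hi
          simp only [Finset.mem_filter, Finset.mem_univ, true_and, ne_eq, Prod.mk.injEq,
            not_and_or]
          rcases hi with rfl | rfl
          · exact hj
          · exact hc
        have h2le : 2 ≤ wt e := by
          have := Finset.card_le_card hsub
          rwa [Finset.card_insert_of_notMem (by simpa using hjk), Finset.card_singleton] at this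
        omega
      have hex : ∃ j : Fin 4, e.1 j ≠ 0 ∨ e.2 j ≠ 0 := by
        by_contra hc
        push_neg at hc
        apply hne
        ext j
        · exact (hc j).1
        · exact (hc j).2
      obtain ⟨j, hj⟩ := hex
      simp only [symp, Fin.sum_univ_four] at h1 h2
      fin_cases j
      case _ =>
        obtain ⟨a1, b1⟩ := hzero 0 1 (by decide) hj
        obtain ⟨a2, b2⟩ := hzero 0 2 (by decide) hj
        obtain ⟨a3, b3⟩ := hzero 0 3 (by decide) hj
        rw [a1, b1, a2, b2, a3, b3] at h1 h2
        simp at h1 h2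
        rcases hj with hj | hj <;> simp_all
      case _ =>
        obtain ⟨a1, b1⟩ := hzero 1 0 (by decide) hj
        obtain ⟨a2, b2⟩ := hzero 1 2 (by decide) hj
        obtain ⟨a3, b3⟩ := hzero 1 3 (by decide) hj
        rw [a1, b1, a2, b2, a3, b3] at h1 h2
        simp at h1 h2
        rcases hj with hj | hj <;> simp_all
      case _ =>
        obtain ⟨a1, b1⟩ := hzero 2 0 (by decide) hj
        obtain ⟨a2, b2⟩ := hzero 2 1 (by decide) hj
        obtain ⟨a3, b3⟩ := hzero 2 3 (by decide) hj
        rw [a1, b1, a2, b2, a3, b3] at h1 h2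
        simp at h1 h2
        rcases hj with hj | hj <;> simp_all
      case _ =>
        obtain ⟨a1, b1⟩ := hzero 3 0 (by decide) hj
        obtain ⟨a2, b2⟩ := hzero 3 1 (by decide) hj
        obtain ⟨a3, b3⟩ := hzero 3 2 (by decide) hj
        rw [a1, b1, a2, b2, a3, b3] at h1 h2
        simp at h1 h2
        rcases hj with hj | hj <;> simp_all
end

section
/- Let r₁ = ((1,0,1,1), (0,3,0,0)) and r₂ = ((0,1,0,0), (1,0,1,1)) be integer symplectic vectors on n = 4 registers. Then r₁ ⊙ r₂ = 0 in ℤ; the reductions of r₁ and r₂ modulo 2 are the generators XZXX and ZXZZ of the [[4,2,2]] code (i.e. ((1,0,1,1),(0,1,0,0)) and ((0,1,0,0),(1,0,1,1)) over ZMod 2); yet there exists a nonzero e : (Fin 4 → ZMod 3) × (Fin 4 → ZMod 3) of weight 1 that is undetectable for the reductions of r₁ and r₂ modulo 3. (An invariant form of the [[4,2,2]] code obtained by the prescribed method can have its distance drop to 1 when used as a qutrit code.) -/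
/-- An invariant form of the `[[4,2,2]]` code obtained by the prescribed method can
have its distance drop to 1 when used as a qutrit code. -/
theorem invariant_422_distance_drops :
    symp ((![1, 0, 1, 1], ![0, 3, 0, 0]) : (Fin 4 → ℤ) × (Fin 4 → ℤ))
      ((![0, 1, 0, 0], ![1, 0, 1, 1]) : (Fin 4 → ℤ) × (Fin 4 → ℤ)) = 0 ∧
    ((fun j => ((![1, 0, 1, 1] : Fin 4 → ℤ) j : ZMod 2)) = ![1, 0, 1, 1] ∧
     (fun j => ((![0, 3, 0, 0] : Fin 4 → ℤ) j : ZMod 2)) = ![0, 1, 0, 0] ∧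
     (fun j => ((![0, 1, 0, 0] : Fin 4 → ℤ) j : ZMod 2)) = ![0, 1, 0, 0] ∧
     (fun j => ((![1, 0, 1, 1] : Fin 4 → ℤ) j : ZMod 2)) = ![1, 0, 1, 1]) ∧
    ∃ e : (Fin 4 → ZMod 3) × (Fin 4 → ZMod 3), e ≠ 0 ∧ wt e = 1 ∧
      symp (fun j => ((![1, 0, 1, 1] : Fin 4 → ℤ) j : ZMod 3),
            fun j => ((![0, 3, 0, 0] : Fin 4 → ℤ) j : ZMod 3)) e = 0 ∧
      symp (fun j => ((![0, 1, 0, 0] : Fin 4 → ℤ) j : ZMod 3),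
            fun j => ((![1, 0, 1, 1] : Fin 4 → ℤ) j : ZMod 3)) e = 0 := by
  refine ⟨?_, ⟨?_, ?_, ?_, ?_⟩, ⟨![0,1,0,0], ![0,0,0,0]⟩, ?_, ?_, ?_, ?_⟩
  · simp [symp, Fin.sum_univ_four]
  · funext j; fin_cases j <;> decide
  · funext j; fin_cases j <;> decide
  · funext j; fin_cases j <;> decide
  · funext j; fin_cases j <;> decide
  · intro h
    have := congrFun (congrArg Prod.fst h) 1
    simp at this
  · decide
  · simp [symp, Fin.sum_univ_four]; decide
  · simp [symp, Fin.sum_univ_four]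
end

section
/- Let n, k, t, p be natural numbers with p ≥ 2 and t ≤ k. If (p² − 1)^(k − t) < Nat.choose n t, then p^k < ∑_{j=0}^{t} (Nat.choose n j) · (p² − 1)^j. (If p is below the cutoff p** = √(1 + C(n,t)^{1/(k−t)}), then the quantum Hamming bound is violated.) -/
/-- If `p` is below the cutoff `p** = √(1 + C(n,t)^(1/(k-t)))`, then the quantum
Hamming bound is violated. -/
theorem hamming_bound_violated (n k t p : ℕ) (hp : 2 ≤ p) (htk : t ≤ k)
    (hcut : (p ^ 2 - 1) ^ (k - t) < Nat.choose n t) :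
    p ^ k < ∑ j ∈ Finset.range (t + 1), Nat.choose n j * (p ^ 2 - 1) ^ j := by
  have hpp : p + 1 ≤ p ^ 2 := by nlinarith
  have h1 : p ^ k ≤ (p ^ 2 - 1) ^ k := Nat.pow_le_pow_left (by omega) k
  have hpos : 0 < (p ^ 2 - 1) ^ t := Nat.pow_pos (by omega)
  have h2 : (p ^ 2 - 1) ^ k < Nat.choose n t * (p ^ 2 - 1) ^ t := by
    calc (p ^ 2 - 1) ^ k = (p ^ 2 - 1) ^ (k - t) * (p ^ 2 - 1) ^ t := by
          rw [← pow_add]; congr 1; omega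
      _ < Nat.choose n t * (p ^ 2 - 1) ^ t := (Nat.mul_lt_mul_right hpos).mpr hcut
  have h3 : Nat.choose n t * (p ^ 2 - 1) ^ t ≤
      ∑ j ∈ Finset.range (t + 1), Nat.choose n j * (p ^ 2 - 1) ^ j :=
    Finset.single_le_sum (f := fun j => Nat.choose n j * (p ^ 2 - 1) ^ j) (fun i _ => Nat.zero_le _) (Finset.self_mem_range_succ t)
  omega
end
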